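/- Let p ≥ 1 be an integer, a < b real numbers, and let f, s : ℝ → ℝ be p-times continuously differentiable on an open interval containing [a, b] with s^{(k)}(a) = f^{(k)}(a) and s^{(k)}(b) = f^{(k)}(b) for all k = 0, 1, …, p−1. Let r : ℝ → ℝ be the (b−a)-periodic extension of (f − s) restricted to [a, b), rescaled to period 2π via r̃(x) = r(a + (b−a)x/(2π)). Then r̃ is (p−1)-times continuously differentiable on ℝ and there exists a constant C > 0 such that its Fourier coefficients satisfy |r̂̃(ℓ)| ≤ C · |ℓ|^{−p} for all nonzero integers ℓ. -/

import Mathlib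

open Set Filter Complex intervalIntegral

noncomputable def fourierCoeff2pi (g : ℝ → ℂ) (ℓ : ℤ) : ℂ :=
  (1 / (2 * (Real.pi : ℂ))) *
    ∫ x in (0:ℝ)..(2 * Real.pi), g x * Complex.exp (-(Complex.I * (ℓ : ℂ) * (x : ℂ)))

section aux
open scoped Topology

lemma bspf_aux (p : ℕ) (a L α β : ℝ) (hL : 0 < L)
    (hαa : α < a) (hbβ : a + L < β) (F : ℝ → ℝ)
    (hF : ContDiffOn ℝ p F (Set.Ioo α β))
    (hz : ∀ m < p, iteratedDeriv m F a = 0 ∧ iteratedDeriv m F (a + L) = 0) :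
    ∀ j k : ℕ, k + j + 1 ≤ p →
      ContDiff ℝ (j : ℕ) (fun t => iteratedDeriv k F (toIcoMod hL a t)) := by
  have hU : IsOpen (Set.Ioo α β) := isOpen_Ioo
  have haU : a ∈ Set.Ioo α β := ⟨hαa, by linarith⟩
  have hbU : a + L ∈ Set.Ioo α β := ⟨by linarith, hbβ⟩
  have hIcoU : Set.Ico a (a + L) ⊆ Set.Ioo α β := fun x hx => ⟨by linarith [hx.1], by linarith [hx.2]⟩
  -- smoothness of iterated derivatives
  have hd : ∀ k : ℕ, k ≤ p → ContDiffOn ℝ ((p - k : ℕ)) (iteratedDeriv k F) (Set.Ioo α β) := by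
    intro k
    induction k with
    | zero => intro _; simpa [iteratedDeriv_zero] using hF
    | succ k ih =>
      intro hk
      have hk' : k ≤ p := by omega
      have h1 : ContDiffOn ℝ ((p - (k+1) : ℕ)) (deriv (iteratedDeriv k F)) (Set.Ioo α β) :=
        (ih hk').deriv_of_isOpen hU (by exact_mod_cast (by omega : p - (k+1) + 1 ≤ p - k))
      rw [iteratedDeriv_succ]
      exact h1
  have hD' : ∀ k : ℕ, k < p → ∀ x ∈ Set.Ioo α β,
      HasDerivAt (iteratedDeriv k F) (iteratedDeriv (k+1) F x) x := by
    intro k hk x hx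
    have h1 : ContDiffAt ℝ ((p - k : ℕ)) (iteratedDeriv k F) x :=
      (hd k hk.le).contDiffAt (hU.mem_nhds hx)
    have h2 : DifferentiableAt ℝ (iteratedDeriv k F) x :=
      h1.differentiableAt (by exact_mod_cast (by omega : p - k ≠ 0))
    have h3 := h2.hasDerivAt
    rwa [show iteratedDeriv (k+1) F = deriv (iteratedDeriv k F) from iteratedDeriv_succ]
  have contD : ∀ k : ℕ, k ≤ p → ContinuousOn (iteratedDeriv k F) (Set.Ioo α β) :=
    fun k hk => (hd k hk).continuousOn
  -- the periodic extensions
  set R : ℕ → ℝ → ℝ := fun k t => iteratedDeriv k F (toIcoMod hL a t) with hRdef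
  have Rper : ∀ k, Function.Periodic (R k) L := by
    intro k t; simp only [hRdef, toIcoMod_add_right]
  have RIco : ∀ k, ∀ t ∈ Set.Ico a (a + L), R k t = iteratedDeriv k F t := by
    intro k t ht; simp only [hRdef]; rw [(toIcoMod_eq_self hL).2 ht]
  -- eventual equalities at the gluing point a
  have hevR : ∀ k : ℕ, R k =ᶠ[𝓝[Set.Ici a] a] iteratedDeriv k F := by
    intro k
    filter_upwards [nhdsWithin_le_nhds (Iio_mem_nhds (by linarith : a < a + L)),
      self_mem_nhdsWithin] with x h1 h2
    exact RIco k x ⟨h2, h1⟩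
  have hevL : ∀ k : ℕ, k < p →
      R k =ᶠ[𝓝[Set.Iic a] a] (fun x => iteratedDeriv k F (x + L)) := by
    intro k hk
    filter_upwards [nhdsWithin_le_nhds (Ioi_mem_nhds (by linarith : a - L < a)),
      self_mem_nhdsWithin] with x h1 h2
    have h1' : a - L < x := h1
    rcases eq_or_lt_of_le (show x ≤ a from h2) with he | hlt2
    · rw [he, RIco k a ⟨le_rfl, by linarith⟩, (hz k hk).1, (hz k hk).2]
    · rw [show R k x = R k (x + L) from ((Rper k) x).symm,
        RIco k (x + L) ⟨by linarith, by linarith⟩]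
  have hRa : ∀ k, R k a = iteratedDeriv k F a := fun k => RIco k a ⟨le_rfl, by linarith⟩
  -- pointwise continuity on the fundamental domain
  have contAt' : ∀ k : ℕ, k < p → ∀ t ∈ Set.Ico a (a + L), ContinuousAt (R k) t := by
    intro k hk t ht
    rcases eq_or_lt_of_le ht.1 with heq | hlt
    · subst heq
      have h₂ : ContinuousWithinAt (R k) (Set.Ici a) a :=
        (((contD k hk.le).continuousAt (hU.mem_nhds haU)).continuousWithinAt).congr_of_eventuallyEq
          (hevR k) (hRa k)
      have hc1 : ContinuousAt (iteratedDeriv k F) (a + L) :=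
        (contD k hk.le).continuousAt (hU.mem_nhds hbU)
      have hc : ContinuousAt (fun x : ℝ => iteratedDeriv k F (x + L)) a := by
        have := ContinuousAt.comp (f := fun x : ℝ => x + L) (x := a) hc1
          ((continuous_id.add continuous_const).continuousAt)
        simpa [Function.comp_def] using this
      have h₁ : ContinuousWithinAt (R k) (Set.Iic a) a :=
        hc.continuousWithinAt.congr_of_eventuallyEq (hevL k hk)
          (by rw [hRa k, (hz k hk).1, (hz k hk).2])
      have h3 := h₁.union h₂
      rwa [Set.Iic_union_Ici, continuousWithinAt_univ] at h3
    · have hev : R k =ᶠ[𝓝 t] iteratedDeriv k F := by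
        filter_upwards [Ioo_mem_nhds hlt ht.2] with x hx
        exact RIco k x ⟨hx.1.le, hx.2⟩
      exact ((contD k hk.le).continuousAt (hU.mem_nhds (hIcoU ht))).congr hev.symm
  -- pointwise differentiability on the fundamental domain
  have derAt' : ∀ k : ℕ, k + 1 < p → ∀ t ∈ Set.Ico a (a + L),
      HasDerivAt (R k) (iteratedDeriv (k+1) F t) t := by
    intro k hk t ht
    rcases eq_or_lt_of_le ht.1 with heq | hlt
    · subst heq
      have h₂ : HasDerivWithinAt (R k) (iteratedDeriv (k+1) F a) (Set.Ici a) a :=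
        ((hD' k (by omega) a haU).hasDerivWithinAt).congr_of_eventuallyEq (hevR k) (hRa k)
      have hb' : HasDerivAt (fun x : ℝ => iteratedDeriv k F (x + L))
          (iteratedDeriv (k+1) F (a + L)) a := by
        have := HasDerivAt.comp (h := fun x : ℝ => x + L) (x := a)
          (hD' k (by omega) (a + L) hbU) ((hasDerivAt_id a).add_const L)
        simpa [Function.comp_def] using this
      have h₁ : HasDerivWithinAt (R k) (iteratedDeriv (k+1) F (a + L)) (Set.Iic a) a :=
        hb'.hasDerivWithinAt.congr_of_eventuallyEq (hevL k (by omega))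
          (by rw [hRa k, (hz k (by omega)).1, (hz k (by omega)).2])
      rw [show iteratedDeriv (k+1) F (a + L) = iteratedDeriv (k+1) F a from by
        rw [(hz (k+1) hk).2, (hz (k+1) hk).1]] at h₁
      have h3 := h₁.union h₂
      rwa [Set.Iic_union_Ici, hasDerivWithinAt_univ] at h3
    · have hev : R k =ᶠ[𝓝 t] iteratedDeriv k F := by
        filter_upwards [Ioo_mem_nhds hlt ht.2] with x hx
        exact RIco k x ⟨hx.1.le, hx.2⟩
      exact (hD' k (by omega) t (hIcoU ht)).congr_of_eventuallyEq hev
  -- transporting by periodicity to all of ℝ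
  have hpt : ∀ t : ℝ, t - toIcoDiv hL a t • L = toIcoMod hL a t := by
    intro t
    have := toIcoMod_add_toIcoDiv_zsmul hL a t
    linarith
  have hshift : ∀ k (n : ℤ), (fun x => R k (x - n • L)) = R k := by
    intro k n; funext x; exact (Rper k).sub_zsmul_eq n
  have contAt : ∀ k : ℕ, k < p → ∀ t : ℝ, ContinuousAt (R k) t := by
    intro k hk t
    have h1 := contAt' k hk (toIcoMod hL a t) (toIcoMod_mem_Ico hL a t)
    rw [← hpt t] at h1
    have h2 : ContinuousAt (fun x : ℝ => R k (x - toIcoDiv hL a t • L)) t := by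
      have := ContinuousAt.comp (f := fun x : ℝ => x - toIcoDiv hL a t • L) (x := t) h1
        ((continuous_id.sub continuous_const).continuousAt)
      simpa [Function.comp_def] using this
    rwa [hshift k _] at h2
  have derAt : ∀ k : ℕ, k + 1 < p → ∀ t : ℝ, HasDerivAt (R k) (R (k+1) t) t := by
    intro k hk t
    have hmem := toIcoMod_mem_Ico hL a t
    have h1 := derAt' k hk (toIcoMod hL a t) hmem
    have hval : iteratedDeriv (k+1) F (toIcoMod hL a t) = R (k+1) t := rfl
    rw [hval, ← hpt t] at h1
    have h2 : HasDerivAt (fun x : ℝ => R k (x - toIcoDiv hL a t • L)) (R (k+1) t) t := by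
      have := HasDerivAt.comp (h := fun x : ℝ => x - toIcoDiv hL a t • L) (x := t) h1
        ((hasDerivAt_id t).sub_const _)
      simpa [Function.comp_def] using this
    rwa [hshift k _] at h2
  -- the inductive smoothness argument
  intro j
  induction j with
  | zero =>
    intro k hk
    rw [show ((0:ℕ) : WithTop ℕ∞) = 0 from rfl, contDiff_zero]
    exact continuous_iff_continuousAt.2 fun t => contAt k (by omega) t
  | succ j ih =>
    intro k hk
    have hder : ∀ t, HasDerivAt (R k) (R (k+1) t) t := derAt k (by omega)
    have hder' : deriv (R k) = R (k+1) := funext fun t => (hder t).deriv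
    rw [show ((j+1:ℕ) : WithTop ℕ∞) = (j : WithTop ℕ∞) + 1 from by push_cast; rfl,
      contDiff_succ_iff_deriv]
    refine ⟨fun t => (hder t).differentiableAt, by simp, ?_⟩
    rw [hder']
    exact ih (k+1) (by omega)

end aux

open scoped Topology in
theorem bspf_periodization (p : ℕ) (hp : 1 ≤ p) (a b α β : ℝ) (hab : a < b)
    (hsub : Set.Icc a b ⊆ Set.Ioo α β) (f s : ℝ → ℝ)
    (hf : ContDiffOn ℝ p f (Set.Ioo α β)) (hs : ContDiffOn ℝ p s (Set.Ioo α β))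
    (hmatch : ∀ k < p,
      iteratedDerivWithin k s (Set.Ioo α β) a = iteratedDerivWithin k f (Set.Ioo α β) a ∧
      iteratedDerivWithin k s (Set.Ioo α β) b = iteratedDerivWithin k f (Set.Ioo α β) b)
    (r : ℝ → ℝ) (hrper : ∀ x : ℝ, r (x + (b - a)) = r x)
    (hreq : ∀ x ∈ Set.Ico a b, r x = f x - s x) :
    ContDiff ℝ (p - 1) (fun x : ℝ => r (a + (b - a) * x / (2 * Real.pi))) ∧
      ∃ C > (0:ℝ), ∀ ℓ : ℤ, ℓ ≠ 0 →
        ‖fourierCoeff2pi (fun x : ℝ => (r (a + (b - a) * x / (2 * Real.pi)) : ℂ)) ℓ‖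
          ≤ C / |(ℓ : ℝ)| ^ p := by
  have hπ : (0:ℝ) < Real.pi := Real.pi_pos
  have h2π : (0:ℝ) < 2 * Real.pi := by positivity
  set L : ℝ := b - a with hLdef
  have hL : 0 < L := by rw [hLdef]; linarith
  have hLb : a + L = b := by rw [hLdef]; ring
  set F : ℝ → ℝ := fun y => f y - s y with hFdef
  have hF : ContDiffOn ℝ p F (Set.Ioo α β) := hf.sub hs
  have hU : IsOpen (Set.Ioo α β) := isOpen_Ioo
  have haU : a ∈ Set.Ioo α β := hsub ⟨le_rfl, hab.le⟩
  have hbU : b ∈ Set.Ioo α β := hsub ⟨hab.le, le_rfl⟩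
  -- zero boundary values of all iterated derivatives up to order `p-1`
  have hopen : ∀ (g : ℝ → ℝ) (m : ℕ) (x : ℝ), x ∈ Set.Ioo α β →
      iteratedDerivWithin m g (Set.Ioo α β) x = iteratedDeriv m g x := by
    intro g m x hx
    simp only [iteratedDerivWithin, iteratedDeriv,
      iteratedFDerivWithin_of_isOpen m isOpen_Ioo hx]
  have hsubW : ∀ m ≤ p, ∀ x ∈ Set.Ioo α β,
      iteratedDeriv m F x = iteratedDeriv m f x - iteratedDeriv m s x := by
    intro m hm x hx
    have hm' : ((m : ℕ) : WithTop ℕ∞) ≤ (p : ℕ) := by exact_mod_cast hm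
    rw [← hopen F m x hx, ← hopen f m x hx, ← hopen s m x hx]
    exact iteratedDerivWithin_sub hx isOpen_Ioo.uniqueDiffOn ((hf.of_le hm') x hx) ((hs.of_le hm') x hx)
  have hz : ∀ m < p, iteratedDeriv m F a = 0 ∧ iteratedDeriv m F (a + L) = 0 := by
    intro m hm
    constructor
    · rw [hsubW m hm.le a haU, ← hopen f m a haU, ← hopen s m a haU, (hmatch m hm).1, sub_self]
    · rw [hLb, hsubW m hm.le b hbU, ← hopen f m b hbU, ← hopen s m b hbU, (hmatch m hm).2,
        sub_self]
  -- smoothness of iterated derivatives (same as in `bspf_aux`)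
  have hd : ∀ k : ℕ, k ≤ p → ContDiffOn ℝ ((p - k : ℕ)) (iteratedDeriv k F) (Set.Ioo α β) := by
    intro k
    induction k with
    | zero => intro _; simpa [iteratedDeriv_zero] using hF
    | succ k ih =>
      intro hk
      have hk' : k ≤ p := by omega
      have h1 : ContDiffOn ℝ ((p - (k+1) : ℕ)) (deriv (iteratedDeriv k F)) (Set.Ioo α β) :=
        (ih hk').deriv_of_isOpen hU (by exact_mod_cast (by omega : p - (k+1) + 1 ≤ p - k))
      rw [iteratedDeriv_succ]
      exact h1
  have hD' : ∀ k : ℕ, k < p → ∀ x ∈ Set.Ioo α β,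
      HasDerivAt (iteratedDeriv k F) (iteratedDeriv (k+1) F x) x := by
    intro k hk x hx
    have h1 : ContDiffAt ℝ ((p - k : ℕ)) (iteratedDeriv k F) x :=
      (hd k hk.le).contDiffAt (hU.mem_nhds hx)
    have h2 : DifferentiableAt ℝ (iteratedDeriv k F) x :=
      h1.differentiableAt (by exact_mod_cast (by omega : p - k ≠ 0))
    have h3 := h2.hasDerivAt
    rwa [show iteratedDeriv (k+1) F = deriv (iteratedDeriv k F) from iteratedDeriv_succ]
  have contD : ∀ k : ℕ, k ≤ p → ContinuousOn (iteratedDeriv k F) (Set.Ioo α β) :=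
    fun k hk => (hd k hk).continuousOn
  -- identification of `r` with the periodic extension
  have hrtoIco : ∀ t : ℝ, r t = iteratedDeriv 0 F (toIcoMod hL a t) := by
    intro t
    have hper : Function.Periodic r L := hrper
    have heq : toIcoMod hL a t = t - toIcoDiv hL a t • L := by
      have := toIcoMod_add_toIcoDiv_zsmul hL a t; linarith
    have hmem := toIcoMod_mem_Ico hL a t
    rw [hLb] at hmem
    have h5 : r (toIcoMod hL a t) = F (toIcoMod hL a t) := hreq _ hmem
    rw [iteratedDeriv_zero, ← h5, heq, hper.sub_zsmul_eq]
  -- Part 1 : smoothness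
  have hsmooth := bspf_aux p a L α β hL haU.1 (hLb ▸ hbU.2) F hF hz (p - 1) 0 (by omega)
  set φ : ℝ → ℝ := fun x : ℝ => a + L * x / (2 * Real.pi) with hφdef
  have hφC : ContDiff ℝ ((p - 1 : ℕ)) φ :=
    contDiff_const.add ((contDiff_const.mul contDiff_id).div_const _)
  have part1 : ContDiff ℝ ((p - 1 : ℕ)) (fun x : ℝ => r (φ x)) := by
    have heq : (fun x : ℝ => r (φ x)) =
        fun x : ℝ => iteratedDeriv 0 F (toIcoMod hL a (φ x)) := funext fun x => hrtoIco _
    rw [heq]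
    exact hsmooth.comp hφC
  refine ⟨part1, ?_⟩
  -- Part 2 : decay of Fourier coefficients
  have hφab : ∀ x ∈ Set.Icc (0:ℝ) (2 * Real.pi), φ x ∈ Set.Icc a b := by
    intro x hx
    constructor
    · have : 0 ≤ L * x / (2 * Real.pi) := div_nonneg (mul_nonneg hL.le hx.1) h2π.le
      simp only [hφdef]; linarith
    · have h1 : L * x / (2 * Real.pi) ≤ L := by
        rw [div_le_iff₀ h2π]
        nlinarith [hx.2, hL]
      simp only [hφdef]; linarith
  have hφd : ∀ x : ℝ, HasDerivAt φ (L / (2 * Real.pi)) x := by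
    intro x
    simpa [hφdef] using (((hasDerivAt_id x).const_mul L).div_const (2 * Real.pi)).const_add a
  set c : ℝ := L / (2 * Real.pi) with hcdef
  set G : ℕ → ℝ → ℂ := fun k x => ((c ^ k * iteratedDeriv k F (φ x) : ℝ) : ℂ) with hGdef
  have hG' : ∀ k, k < p → ∀ x ∈ Set.uIcc (0:ℝ) (2 * Real.pi),
      HasDerivAt (G k) (G (k+1) x) x := by
    intro k hk x hx
    rw [Set.uIcc_of_le h2π.le] at hx
    have hφx : φ x ∈ Set.Ioo α β := hsub (hφab x hx)
    have h1 : HasDerivAt (fun y => iteratedDeriv k F (φ y))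
        (iteratedDeriv (k+1) F (φ x) * (L / (2 * Real.pi))) x := by
      have := HasDerivAt.comp (x := x) (hD' k hk (φ x) hφx) (hφd x)
      simpa [Function.comp_def] using this
    have h2 := (h1.const_mul (c ^ k)).ofReal_comp
    simp only [hGdef]
    convert h2 using 2
    push_cast
    ring
  have hφcont : ContinuousOn φ (Set.Icc (0:ℝ) (2 * Real.pi)) :=
    (contDiff_const.add ((contDiff_const.mul contDiff_id).div_const
      (2 * Real.pi)) : ContDiff ℝ 1 φ).continuous.continuousOn
  have hGcont : ∀ k, k ≤ p → ContinuousOn (G k) (Set.Icc (0:ℝ) (2 * Real.pi)) := by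
    intro k hk
    have h1 : ContinuousOn (fun x => iteratedDeriv k F (φ x)) (Set.Icc (0:ℝ) (2 * Real.pi)) :=
      (contD k hk).comp hφcont fun x hx => hsub (hφab x hx)
    simp only [hGdef]
    exact Complex.continuous_ofReal.comp_continuousOn (continuousOn_const.mul h1)
  have hGint : ∀ k, k ≤ p → IntervalIntegrable (G k) MeasureTheory.volume 0 (2 * Real.pi) := by
    intro k hk
    apply ContinuousOn.intervalIntegrable
    rw [Set.uIcc_of_le h2π.le]
    exact hGcont k hk
  have hφ0 : φ 0 = a := by simp [hφdef]
  have hφ2π : φ (2 * Real.pi) = b := by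
    simp only [hφdef]
    rw [mul_div_assoc, div_self (ne_of_gt h2π), mul_one, hLb]
  have hGbdry : ∀ k, k < p → G k 0 = 0 ∧ G k (2 * Real.pi) = 0 := by
    intro k hk
    have h2 := (hz k hk).2
    rw [hLb] at h2
    constructor
    · simp [hGdef, hφ0, (hz k hk).1]
    · simp [hGdef, hφ2π, h2]
  obtain ⟨M, hM⟩ := isCompact_Icc.exists_bound_of_continuousOn (hGcont p le_rfl)
  refine ⟨max M 0 + 1, by positivity, ?_⟩
  intro ℓ hℓ
  have hℓℝ : (0:ℝ) < |(ℓ:ℝ)| := by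
    rw [abs_pos]
    exact_mod_cast hℓ
  have hℓℂ : ((ℓ:ℂ)) ≠ 0 := by exact_mod_cast hℓ
  -- identify `fourierCoeff2pi` with `fourierCoeffOn`
  have hreq2π : ∀ x ∈ Set.uIcc (0:ℝ) (2 * Real.pi), ((r (φ x) : ℝ) : ℂ) = G 0 x := by
    intro x hx
    rw [Set.uIcc_of_le h2π.le] at hx
    have h0 : G 0 x = ((iteratedDeriv 0 F (φ x) : ℝ) : ℂ) := by simp [hGdef]
    rcases eq_or_lt_of_le hx.2 with he | hlt
    · have hb0 : F b = 0 := by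
        have := (hz 0 (by omega)).2
        rwa [hLb, iteratedDeriv_zero] at this
      have ha0 : F a = 0 := by
        have := (hz 0 (by omega)).1
        rwa [iteratedDeriv_zero] at this
      subst he
      rw [h0, hφ2π, iteratedDeriv_zero, hb0]
      have hrb : r b = r a := by rw [← hLb]; exact hrper a
      rw [hrb, hreq a ⟨le_rfl, hab⟩, show f a - s a = F a from rfl, ha0]
    · have hmem : φ x ∈ Set.Ico a b := by
        refine ⟨(hφab x hx).1, ?_⟩
        have : L * x / (2 * Real.pi) < L := by
          rw [div_lt_iff₀ h2π]
          nlinarith [hL]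
        simp only [hφdef]; linarith
      rw [h0, iteratedDeriv_zero, hreq _ hmem]
  have hstart : fourierCoeff2pi (fun x : ℝ => ((r (φ x) : ℝ) : ℂ)) ℓ
      = fourierCoeffOn h2π (G 0) ℓ := by
    rw [fourierCoeff2pi, fourierCoeffOn_eq_integral]
    have hEq : Set.EqOn (fun x : ℝ => ((r (φ x) : ℝ) : ℂ) * Complex.exp (-(Complex.I * ℓ * x)))
        (fun x : ℝ => fourier (-ℓ) (x : AddCircle (2 * Real.pi - 0)) • G 0 x)
        (Set.uIcc (0:ℝ) (2 * Real.pi)) := by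
      intro x hx
      have hne : ((2 * Real.pi - 0 : ℝ) : ℂ) ≠ 0 := Complex.ofReal_ne_zero.2 (by linarith)
      simp only [smul_eq_mul]
      rw [← hreq2π x hx, fourier_coe_apply, mul_comm]
      congr 1
      congr 1
      rw [eq_div_iff hne]
      push_cast
      ring
    rw [intervalIntegral.integral_congr hEq, real_smul]
    push_cast
    norm_num
  -- one integration by parts
  have hstep : ∀ k, k < p → ‖fourierCoeffOn h2π (G k) ℓ‖
      = ‖fourierCoeffOn h2π (G (k+1)) ℓ‖ / |(ℓ:ℝ)| := by
    intro k hk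
    have hπC : (Real.pi : ℂ) ≠ 0 := Complex.ofReal_ne_zero.2 hπ.ne'
    have key : fourierCoeffOn h2π (G k) ℓ
        = (1 / (Complex.I * ℓ)) * fourierCoeffOn h2π (G (k+1)) ℓ := by
      rw [fourierCoeffOn_of_hasDerivAt h2π hℓ (hG' k hk) (hGint (k+1) hk),
        (hGbdry k hk).1, (hGbdry k hk).2]
      push_cast
      field_simp
      ring
    rw [key, norm_mul, norm_div, norm_one, norm_mul, Complex.norm_I, one_mul]
    rw [show ‖(ℓ:ℂ)‖ = |(ℓ:ℝ)| from Complex.norm_intCast ℓ]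
    rw [one_div, ← div_eq_inv_mul]
  -- iterate
  have hiter : ∀ k, k ≤ p → ‖fourierCoeffOn h2π (G 0) ℓ‖
      = ‖fourierCoeffOn h2π (G k) ℓ‖ / |(ℓ:ℝ)| ^ k := by
    intro k
    induction k with
    | zero => intro _; simp
    | succ k ih =>
      intro hk
      rw [ih (by omega), hstep k (by omega), div_div, ← pow_succ']
  -- bound the top coefficient
  have hfourier_norm : ∀ x : ℝ, ‖(fourier (-ℓ) (x : AddCircle (2 * Real.pi - 0)) : ℂ)‖ = 1 := by
    intro x
    rw [fourier_apply, Circle.norm_coe]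
  have hMb : ‖fourierCoeffOn h2π (G p) ℓ‖ ≤ M := by
    rw [fourierCoeffOn_eq_integral, norm_smul]
    have h1 : ‖∫ x in (0:ℝ)..(2 * Real.pi),
        fourier (-ℓ) (x : AddCircle (2 * Real.pi - 0)) • G p x‖ ≤ M * |2 * Real.pi - 0| := by
      apply intervalIntegral.norm_integral_le_of_norm_le_const
      intro x hx
      rw [Set.uIoc_of_le h2π.le] at hx
      rw [norm_smul, hfourier_norm x, one_mul]
      exact hM x (Set.Ioc_subset_Icc_self hx)
    calc ‖(1 / (2 * Real.pi - 0) : ℝ)‖ * ‖∫ x in (0:ℝ)..(2 * Real.pi),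
          fourier (-ℓ) (x : AddCircle (2 * Real.pi - 0)) • G p x‖
        ≤ ‖(1 / (2 * Real.pi - 0) : ℝ)‖ * (M * |2 * Real.pi - 0|) := by
          apply mul_le_mul_of_nonneg_left h1 (norm_nonneg _)
      _ = M := by
          rw [Real.norm_of_nonneg (by norm_num; positivity), abs_of_pos (by linarith)]
          field_simp
  -- conclude
  have hpow : (0:ℝ) < |(ℓ:ℝ)| ^ p := pow_pos hℓℝ p
  have hgoal : ‖fourierCoeff2pi (fun x : ℝ => ((r (φ x) : ℝ) : ℂ)) ℓ‖ ≤ M / |(ℓ:ℝ)| ^ p := by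
    rw [hstart, hiter p le_rfl]
    exact (div_le_div_iff_of_pos_right hpow).2 hMb
  calc ‖fourierCoeff2pi (fun x : ℝ => ((r (φ x) : ℝ) : ℂ)) ℓ‖
      ≤ M / |(ℓ:ℝ)| ^ p := hgoal
    _ ≤ (max M 0 + 1) / |(ℓ:ℝ)| ^ p := by
        exact (div_le_div_iff_of_pos_right hpow).2 (by linarith [le_max_left M 0])
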